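/- arXiv:2303.00437 — 2 statements merged into one kernel-verified Lean document; each statement's English description precedes it below -/
import Mathlib

section
/- Let φ(t, t0) be the state transition matrix of ẋ = A(t)x, let R ≻ 0 and Γ(t) ≻ 0 symmetric. The system is FTS with respect to the ellipsoidal domains Ω₀ = {x : xᵀRx ≤ 1}, Ω_t = {x : xᵀΓ(t)x < 1} if and only if Q(t) := φ(t0, t)ᵀ R φ(t0, t) satisfies Q(t) ≻ Γ(t) for all t ∈ J; moreover Q(t0) = R. -/
open Matrix Set

attribute [local instance] Matrix.normedAddCommGroup Matrix.normedSpace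

private lemma quad_trans {n : ℕ} (A : Matrix (Fin n) (Fin n) ℝ) (v w : Fin n → ℝ) :
    v ⬝ᵥ Aᵀ.mulVec w = (A.mulVec v) ⬝ᵥ w := by
  rw [dotProduct_mulVec, vecMul_transpose]

private lemma quad_conj {n : ℕ} (N R : Matrix (Fin n) (Fin n) ℝ) (y : Fin n → ℝ) :
    y ⬝ᵥ (Nᵀ * R * N).mulVec y = (N.mulVec y) ⬝ᵥ R.mulVec (N.mulVec y) := by
  rw [Matrix.mul_assoc, ← mulVec_mulVec, ← mulVec_mulVec, quad_trans]

/-- FTS of the LTV system `ẋ = A(t)x` over ellipsoidal domains is equivalent to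
`Q(t) := φ(t0,t)ᵀ R φ(t0,t) ≻ Γ(t)` on `J`; moreover `Q(t0) = R`. -/
theorem ltv_fts_iff_Q_pos {n : ℕ} (t0 T : ℝ) (hT : 0 < T)
    (A : ℝ → Matrix (Fin n) (Fin n) ℝ)
    (hA : ContinuousOn A (Set.Icc t0 (t0 + T)))
    (φ : ℝ → ℝ → Matrix (Fin n) (Fin n) ℝ)
    (hφ0 : φ t0 t0 = 1)
    (hφinv : ∀ t ∈ Set.Icc t0 (t0 + T), φ t0 t * φ t t0 = 1 ∧ φ t t0 * φ t0 t = 1)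
    (hφsol : ∀ t ∈ Set.Icc t0 (t0 + T),
      HasDerivAt (fun u => φ u t0) (A t * φ t t0) t)
    (Γ : ℝ → Matrix (Fin n) (Fin n) ℝ) (R : Matrix (Fin n) (Fin n) ℝ)
    (hΓsymm : ∀ t ∈ Set.Icc t0 (t0 + T), (Γ t).IsSymm)
    (hΓpd : ∀ t ∈ Set.Icc t0 (t0 + T), (Γ t).PosDef)
    (hRsymm : R.IsSymm) (hRpd : R.PosDef) :
    ((∀ x0 : Fin n → ℝ, x0 ⬝ᵥ R.mulVec x0 ≤ 1 →
        ∀ t ∈ Set.Icc t0 (t0 + T),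
          ((φ t t0).mulVec x0) ⬝ᵥ (Γ t).mulVec ((φ t t0).mulVec x0) < 1) ↔
      (∀ t ∈ Set.Icc t0 (t0 + T), ((φ t0 t)ᵀ * R * φ t0 t - Γ t).PosDef)) ∧
    (φ t0 t0)ᵀ * R * φ t0 t0 = R := by
  constructor
  · constructor
    · -- FTS → PosDef
      intro hFTS t ht
      refine posDef_iff_dotProduct_mulVec.mpr ⟨?_, ?_⟩
      · -- Hermitian
        rw [Matrix.IsHermitian, conjTranspose_eq_transpose_of_trivial]
        rw [Matrix.transpose_sub, (hΓsymm t ht)]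
        congr 1
        rw [Matrix.transpose_mul, Matrix.transpose_mul, transpose_transpose, hRsymm,
          Matrix.mul_assoc]
      · intro y hy
        simp only [star_trivial]
        set N := φ t0 t with hN
        set M := φ t t0 with hM
        have hNM : N * M = 1 := (hφinv t ht).1
        have hMN : M * N = 1 := (hφinv t ht).2
        set u := N.mulVec y with hu
        have hMu : M.mulVec u = y := by
          rw [hu, mulVec_mulVec, hMN, one_mulVec]
        have hune : u ≠ 0 := by
          intro h
          apply hy; rw [← hMu, h, mulVec_zero]
        have hq : 0 < u ⬝ᵥ R.mulVec u := by
          simpa using hRpd.dotProduct_mulVec_pos hune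
        set q := u ⬝ᵥ R.mulVec u with hqdef
        set c : ℝ := (Real.sqrt q)⁻¹ with hc
        have hsq : Real.sqrt q > 0 := Real.sqrt_pos.mpr hq
        have hc2 : c ^ 2 * q = 1 := by
          rw [hc, ← Real.sq_sqrt hq.le]
          field_simp
          rw [Real.sqrt_sq hsq.le]
        have hcpos : 0 < c := inv_pos.mpr hsq
        set x0 := c • u with hx0
        have hx0R : x0 ⬝ᵥ R.mulVec x0 = c ^ 2 * q := by
          rw [hx0, smul_dotProduct, mulVec_smul, dotProduct_smul, smul_eq_mul, smul_eq_mul,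
            hqdef]; ring
        have hM0 : M.mulVec x0 = c • y := by
          rw [hx0, mulVec_smul, hMu]
        have := hFTS x0 (by rw [hx0R, hc2]) t ht
        rw [hM0, smul_dotProduct, mulVec_smul, dotProduct_smul, smul_eq_mul, smul_eq_mul] at this
        have hΓlt : y ⬝ᵥ (Γ t).mulVec y < q := by
          nlinarith [this, hc2, hcpos]
        have hQ : y ⬝ᵥ (Nᵀ * R * N).mulVec y = q := by
          rw [quad_conj]
        rw [sub_mulVec, dotProduct_sub, hQ]
        linarith
    · -- PosDef → FTS
      intro hPD x0 hx0 t ht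
      set N := φ t0 t with hN
      set M := φ t t0 with hM
      have hNM : N * M = 1 := (hφinv t ht).1
      set y := M.mulVec x0 with hy
      have hQ : y ⬝ᵥ (Nᵀ * R * N).mulVec y = x0 ⬝ᵥ R.mulVec x0 := by
        rw [quad_conj, hy, mulVec_mulVec, hNM, one_mulVec]
      by_cases h0 : y = 0
      · rw [h0]; simp
      · have := (hPD t ht).dotProduct_mulVec_pos h0
        simp only [star_trivial, sub_mulVec, dotProduct_sub, hQ] at this
        linarith
  · rw [hφ0]; simp [hRsymm]
end

section
/- With k > 0, t0 = 0, T > 0 and r₀ ≤ 1 < 1/k, the system ẋ₁ = −x₁ − x₂ + k(x₁ − x₂)(x₁²+x₂²), ẋ₂ = x₁ − x₂ + k(x₁+x₂)(x₁²+x₂²) is finite-time stable with respect to Ω₀ = {x : ‖x‖² ≤ 1} and Ω_t = {x : 0.8 k μ(t) ‖x‖² < 1}, where μ(t) = r₀² + (1/k − r₀²)e^{2t} with r₀ = 1: every solution with ‖x(0)‖ ≤ 1 satisfies 0.8 k μ(t)‖x(t)‖² < 1 for all t ∈ [0, T]. -/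
open Set

/-- FTS of the planar example system with respect to the unit disk `Ω₀` and the
time-varying circular trajectory domains `Ω_t = {x : 0.8 k μ(t) ‖x‖² < 1}`,
`μ(t) = 1 + (1/k − 1) e^{2t}`. -/
theorem planar_system_fts (k T : ℝ) (hk : 0 < k) (hk1 : k < 1) (hT : 0 < T)
    (x1 x2 : ℝ → ℝ)
    (hx1 : ∀ t ∈ Set.Icc (0 : ℝ) T, HasDerivAt x1
      (-x1 t - x2 t + k * (x1 t - x2 t) * ((x1 t) ^ 2 + (x2 t) ^ 2)) t)
    (hx2 : ∀ t ∈ Set.Icc (0 : ℝ) T, HasDerivAt x2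
      (x1 t - x2 t + k * (x1 t + x2 t) * ((x1 t) ^ 2 + (x2 t) ^ 2)) t)
    (h0 : (x1 0) ^ 2 + (x2 0) ^ 2 ≤ 1) :
    ∀ t ∈ Set.Icc (0 : ℝ) T,
      0.8 * k * (1 + (1 / k - 1) * Real.exp (2 * t)) *
        ((x1 t) ^ 2 + (x2 t) ^ 2) < 1 := by
  set v : ℝ → ℝ := fun t => (x1 t) ^ 2 + (x2 t) ^ 2 with hv_def
  -- v' = -2v + 2kv²
  have hv : ∀ t ∈ Icc (0 : ℝ) T, HasDerivAt v (-2 * v t + 2 * k * (v t) ^ 2) t := by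
    intro t ht
    have h1 := hx1 t ht
    have h2 := hx2 t ht
    have := (h1.pow 2).add (h2.pow 2)
    refine this.congr_deriv ?_
    simp only [hv_def]
    ring
  -- f(t) = (k + (1-k) e^{2t}) v(t) - 1
  set f : ℝ → ℝ := fun t => (k + (1 - k) * Real.exp (2 * t)) * v t - 1 with hf_def
  have hf : ∀ t ∈ Icc (0 : ℝ) T, HasDerivAt f (2 * k * v t * f t) t := by
    intro t ht
    have he : HasDerivAt (fun t : ℝ => Real.exp (2 * t)) (Real.exp (2 * t) * 2) t := by
      exact (Real.hasDerivAt_exp (2 * t)).comp t (by simpa using (hasDerivAt_id t).const_mul 2)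
    have hm : HasDerivAt (fun t : ℝ => k + (1 - k) * Real.exp (2 * t))
        (2 * (1 - k) * Real.exp (2 * t)) t := by
      have := (he.const_mul (1 - k)).const_add k
      refine this.congr_deriv ?_
      ring
    have := (hm.mul (hv t ht)).sub_const 1
    refine this.congr_deriv ?_
    simp only [hf_def]
    ring
  have hcontf : ∀ u ∈ Icc (0 : ℝ) T, ContinuousAt f u := fun u hu => (hf u hu).continuousAt
  have hf0 : f 0 ≤ 0 := by
    simp only [hf_def, hv_def, mul_zero, Real.exp_zero, mul_one]
    nlinarith
  -- bound on 2 k v on [0,T]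
  obtain ⟨K, hK⟩ : ∃ K, ∀ u ∈ Icc (0 : ℝ) T, |2 * k * v u| ≤ K := by
    have hc : ContinuousOn (fun u => 2 * k * v u) (Icc (0 : ℝ) T) := by
      intro u hu
      exact (continuousAt_const.mul ((hv u hu).continuousAt)).continuousWithinAt
    obtain ⟨C, hC⟩ := isCompact_Icc.exists_bound_of_continuousOn hc
    exact ⟨C, fun u hu => by have := hC u hu; rwa [Real.norm_eq_abs] at this⟩
  -- main claim: f ≤ 0 on [0,T]
  have hfle : ∀ t ∈ Icc (0 : ℝ) T, f t ≤ 0 := by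
    intro t₁ ht₁
    by_contra hpos
    push_neg at hpos
    set S : Set ℝ := {t | t ∈ Icc (0 : ℝ) t₁ ∧ f t ≤ 0} with hS
    have h0S : (0 : ℝ) ∈ S := ⟨⟨le_refl 0, ht₁.1⟩, hf0⟩
    have hbdd : BddAbove S := ⟨t₁, fun u (hu : u ∈ S) => hu.1.2⟩
    set s := sSup S with hs_def
    have hsmem : s ∈ Icc (0 : ℝ) t₁ :=
      ⟨le_csSup hbdd h0S, csSup_le ⟨0, h0S⟩ (fun u (hu : u ∈ S) => hu.1.2)⟩
    have hst : s ∈ Icc (0 : ℝ) T := ⟨hsmem.1, hsmem.2.trans ht₁.2⟩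
    have hfs_le : f s ≤ 0 := by
      have hcs : s ∈ closure S := csSup_mem_closure ⟨0, h0S⟩ hbdd
      have hne : (nhdsWithin s S).NeBot := mem_closure_iff_nhdsWithin_neBot.1 hcs
      exact le_of_tendsto ((hcontf s hst).continuousWithinAt.tendsto)
        (eventually_nhdsWithin_of_forall fun u (hu : u ∈ S) => hu.2)
    have hslt : s < t₁ := by
      rcases lt_or_eq_of_le hsmem.2 with h | h
      · exact h
      · exact absurd (h ▸ hfs_le) (not_le.2 hpos)
    have hpos' : ∀ u, s < u → u ≤ t₁ → 0 < f u := by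
      intro u hsu hut
      by_contra hle
      push_neg at hle
      have : u ∈ S := ⟨⟨hsmem.1.trans hsu.le, hut⟩, hle⟩
      exact absurd (le_csSup hbdd this) (not_le.2 hsu)
    have hfs_ge : 0 ≤ f s := by
      have htd : Filter.Tendsto f (nhdsWithin s (Ioi s)) (nhds (f s)) :=
        (hcontf s hst).continuousWithinAt.tendsto
      refine ge_of_tendsto htd ?_
      filter_upwards [Ioc_mem_nhdsGT_of_mem ⟨le_refl s, hslt⟩] with u hu
      exact (hpos' u hu.1 hu.2).le
    have hfs0 : f s = 0 := le_antisymm hfs_le hfs_ge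
    have hsub : Icc s t₁ ⊆ Icc (0 : ℝ) T := fun u hu =>
      ⟨hst.1.trans hu.1, hu.2.trans ht₁.2⟩
    have hgron := norm_le_gronwallBound_of_norm_deriv_right_le
      (f := f) (f' := fun u => 2 * k * v u * f u) (δ := 0) (K := K) (ε := 0) (a := s) (b := t₁)
      (fun u hu => (hcontf u (hsub hu)).continuousWithinAt)
      (fun u hu => (hf u (hsub (Ico_subset_Icc_self hu))).hasDerivWithinAt)
      (by simp [hfs0])
      (fun u hu => by
        have hKu := hK u (hsub (Ico_subset_Icc_self hu))
        have h1 : ‖2 * k * v u * f u‖ = |2 * k * v u| * ‖f u‖ := by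
          rw [Real.norm_eq_abs, Real.norm_eq_abs, abs_mul]
        rw [h1]
        have : |2 * k * v u| * ‖f u‖ ≤ K * ‖f u‖ :=
          mul_le_mul_of_nonneg_right hKu (norm_nonneg _)
        linarith)
      t₁ ⟨hslt.le, le_refl t₁⟩
    rw [gronwallBound_ε0] at hgron
    simp only [zero_mul] at hgron
    rw [Real.norm_eq_abs] at hgron
    have := abs_nonneg (f t₁)
    have hft0 : f t₁ = 0 := by
      have := abs_eq_zero.1 (le_antisymm hgron (abs_nonneg _))
      exact this
    exact absurd (hft0 ▸ hpos) (lt_irrefl 0)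
  -- conclude
  intro t ht
  have hft := hfle t ht
  have heq : 0.8 * k * (1 + (1 / k - 1) * Real.exp (2 * t)) * (v t) =
      0.8 * ((k + (1 - k) * Real.exp (2 * t)) * v t) := by
    field_simp
  have h2 : (k + (1 - k) * Real.exp (2 * t)) * v t ≤ 1 := by
    have : f t = (k + (1 - k) * Real.exp (2 * t)) * v t - 1 := rfl
    linarith [this ▸ hft]
  calc 0.8 * k * (1 + (1 / k - 1) * Real.exp (2 * t)) * ((x1 t) ^ 2 + (x2 t) ^ 2)
      = 0.8 * ((k + (1 - k) * Real.exp (2 * t)) * v t) := heq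
    _ ≤ 0.8 * 1 := mul_le_mul_of_nonneg_left h2 (by norm_num)
    _ < 1 := by norm_num
end
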